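/- arXiv:chao-dyn/9711010 — 2 statements merged into one kernel-verified Lean document; each statement's English description precedes it below -/
import Mathlib

section
/- Let f(x) = a + bx + c|x|^γ with c ≠ 0 and 1 < γ < 2 (γ not an integer). Then the critical order of f at x = 0 equals γ; that is, the local fractional derivative of order q of f at 0 exists and is 0 for all q < γ with 1 < q, and fails to exist (diverges) for q > γ. -/
open Real Filter Set Topology Asymptotics

/-- Riemann-Liouville fractional derivative of order `q ∈ (N, N+1)` with lower limit `a`:
`(1/Γ(N+1-q)) (d/dx)^{N+1} ∫_a^x f(y)/(x-y)^{q-N} dy`. -/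
noncomputable def rlDerivN (q a : ℝ) (N : ℕ) (f : ℝ → ℝ) (x : ℝ) : ℝ :=
  (1 / Real.Gamma (N + 1 - q)) *
    iteratedDeriv (N + 1) (fun t => ∫ y in a..t, f y / (t - y) ^ (q - N)) x

/-- The local fractional derivative of order `q ∈ (N, N+1)` of `f` at `y` exists and equals `L`:
the Riemann-Liouville derivative (lower limit `y`) of `f` minus its degree-`N` Taylor
polynomial at `y` tends to `L` as `x → y⁺`. -/
def HasLFDgen (f : ℝ → ℝ) (q y : ℝ) (N : ℕ) (L : ℝ) : Prop :=
  Tendsto (fun x => rlDerivN q y N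
      (fun u => f u - ∑ n ∈ Finset.range (N + 1),
        iteratedDeriv n f y / Real.Gamma (n + 1) * (u - y) ^ n) x)
    (𝓝[>] y) (𝓝 L)

open MeasureTheory

lemma abs_rpow_deriv_zero (γ : ℝ) (hγ : 1 < γ) : HasDerivAt (fun x : ℝ => |x| ^ γ) 0 0 := by
  rw [hasDerivAt_iff_tendsto_slope]
  rw [tendsto_zero_iff_abs_tendsto_zero]
  have key : ∀ z : ℝ, z ≠ 0 → |slope (fun x : ℝ => |x| ^ γ) 0 z| = |z| ^ (γ - 1) := by
    intro z hz
    have habs : (0:ℝ) < |z| := abs_pos.2 hz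
    rw [slope_def_field, abs_zero, Real.zero_rpow (by linarith : γ ≠ 0)]
    rw [sub_zero, sub_zero, div_eq_mul_inv, abs_mul, abs_inv,
      Real.abs_rpow_of_nonneg (abs_nonneg z), abs_abs,
      ← Real.rpow_neg_one |z|, ← Real.rpow_add habs]
    norm_num [sub_eq_add_neg]
  have hc : ContinuousAt (fun x : ℝ => x ^ (γ - 1)) |(0:ℝ)| := by
    rw [abs_zero]; exact Real.continuousAt_rpow_const 0 _ (Or.inr (by linarith))
  have h0 : Tendsto (fun z : ℝ => |z| ^ (γ - 1)) (𝓝 0) (𝓝 0) := by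
    have := hc.comp continuous_abs.continuousAt
    simpa [ContinuousAt, Function.comp_def,
      Real.zero_rpow (by linarith : γ - 1 ≠ 0)] using this
  apply (h0.mono_left nhdsWithin_le_nhds).congr'
  filter_upwards [self_mem_nhdsWithin] with z (hz : z ≠ 0)
  exact (key z hz).symm

lemma taylor_part (a b c γ : ℝ) (hγ1 : 1 < γ) :
    (fun u : ℝ => (a + b * u + c * |u| ^ γ) - ∑ n ∈ Finset.range (1 + 1),
      iteratedDeriv n (fun x => a + b * x + c * |x| ^ γ) 0 / Real.Gamma (n + 1) * (u - 0) ^ n)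
    = fun u => c * |u| ^ γ := by
  have hd : HasDerivAt (fun x : ℝ => a + b * x + c * |x| ^ γ) b 0 := by
    have := ((hasDerivAt_const (0:ℝ) a).add ((hasDerivAt_id (0:ℝ)).const_mul b)).add
      ((abs_rpow_deriv_zero γ hγ1).const_mul c)
    simpa [Pi.add_def] using this
  funext u
  rw [Finset.sum_range_succ, Finset.sum_range_succ, Finset.sum_range_zero]
  rw [iteratedDeriv_zero, iteratedDeriv_one, hd.deriv]
  norm_num [Real.Gamma_one, Real.Gamma_two, Real.zero_rpow (by linarith : γ ≠ 0)]

noncomputable def betaI (γ q : ℝ) : ℝ := ∫ s in (0:ℝ)..1, s ^ γ * (1 - s) ^ (1 - q)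

lemma betaI_integrable (γ q : ℝ) (hγ : 0 < γ) (hq : q < 2) :
    IntervalIntegrable (fun s : ℝ => s ^ γ * (1 - s) ^ (1 - q)) volume 0 1 := by
  have h1 : IntervalIntegrable (fun x : ℝ => x ^ (1 - q)) volume 0 1 :=
    intervalIntegral.intervalIntegrable_rpow' (by linarith)
  have h2 := (h1.comp_sub_left 1).symm
  norm_num at h2
  exact h2.continuousOn_mul
    (fun s _ => (Real.continuousAt_rpow_const s γ (Or.inr hγ.le)).continuousWithinAt)

lemma betaI_pos (γ q : ℝ) (hγ : 0 < γ) (hq : q < 2) : 0 < betaI γ q := by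
  apply intervalIntegral.intervalIntegral_pos_of_pos_on (betaI_integrable γ q hγ hq)
    _ zero_lt_one
  intro s hs
  exact mul_pos (Real.rpow_pos_of_pos hs.1 _)
    (Real.rpow_pos_of_pos (by linarith [hs.2]) _)

lemma phi_eq (c γ q t : ℝ) (hγ : 0 < γ) (hq1 : 1 < q) (hq2 : q < 2) (ht : 0 < t) :
    ∫ y in (0:ℝ)..t, (c * |y| ^ γ) / (t - y) ^ (q - 1)
      = (c * betaI γ q) * t ^ (γ + 2 - q) := by
  have step1 : ∫ y in (0:ℝ)..t, (c * |y| ^ γ) / (t - y) ^ (q - 1)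
      = ∫ y in (0:ℝ)..t, c * (y ^ γ * (t - y) ^ (1 - q)) := by
    apply intervalIntegral.integral_congr
    intro y hy
    rw [uIcc_of_le ht.le] at hy
    simp only []
    rw [abs_of_nonneg hy.1, show (1:ℝ) - q = -(q - 1) by ring,
      Real.rpow_neg (by linarith [hy.2] : (0:ℝ) ≤ t - y), div_eq_mul_inv, mul_assoc]
  rw [step1, intervalIntegral.integral_const_mul]
  have hsub := intervalIntegral.integral_comp_mul_right
    (fun y => y ^ γ * (t - y) ^ (1 - q)) ht.ne' (a := 0) (b := 1)
  norm_num at hsub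
  have step2 : ∫ y in (0:ℝ)..t, y ^ γ * (t - y) ^ (1 - q)
      = t * ∫ s in (0:ℝ)..1, (s * t) ^ γ * (t - s * t) ^ (1 - q) := by
    rw [hsub, ← mul_assoc, mul_inv_cancel₀ ht.ne', one_mul]
  have step3 : ∫ s in (0:ℝ)..1, (s * t) ^ γ * (t - s * t) ^ (1 - q)
      = t ^ (γ + 1 - q) * betaI γ q := by
    rw [betaI, ← intervalIntegral.integral_const_mul]
    apply intervalIntegral.integral_congr
    intro s hs
    rw [uIcc_of_le zero_le_one] at hs
    simp only []
    rw [Real.mul_rpow hs.1 ht.le, show t - s * t = t * (1 - s) by ring,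
      Real.mul_rpow ht.le (by linarith [hs.2]),
      show γ + 1 - q = γ + (1 - q) by ring, Real.rpow_add ht]
    ring
  rw [step2, step3, show γ + 2 - q = 1 + (γ + 1 - q) by ring, Real.rpow_add ht,
    Real.rpow_one]
  ring
lemma rl_eq (c γ q x : ℝ) (hγ1 : 1 < γ) (hq1 : 1 < q) (hq2 : q < 2) (hx : 0 < x) :
    rlDerivN q 0 1 (fun u => c * |u| ^ γ) x
      = ((1 / Real.Gamma (2 - q)) * (c * betaI γ q) * (γ + 2 - q) * (γ + 1 - q))
        * x ^ (γ - q) := by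
  have hγ0 : (0:ℝ) < γ := by linarith
  set K := c * betaI γ q with hK
  set p := γ + 2 - q with hp
  set F := fun t : ℝ => ∫ y in (0:ℝ)..t, (c * |y| ^ γ) / (t - y) ^ (q - (1:ℕ)) with hF
  have hFeq : ∀ t ∈ Ioi (0:ℝ), F t = K * t ^ p := by
    intro t ht
    simpa [hF, Nat.cast_one] using phi_eq c γ q t hγ0 hq1 hq2 ht
  have hd1 : ∀ t ∈ Ioi (0:ℝ), deriv F t = K * (p * t ^ (p - 1)) := by
    intro t ht
    have hFt : F =ᶠ[𝓝 t] fun u => K * u ^ p :=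
      eventually_of_mem (isOpen_Ioi.mem_nhds ht) hFeq
    rw [hFt.deriv_eq]
    exact ((Real.hasDerivAt_rpow_const (p := p) (Or.inl (ne_of_gt ht))).const_mul K).deriv
  have hd2 : deriv (deriv F) x = K * (p * ((p - 1) * x ^ (p - 1 - 1))) := by
    have hdF : deriv F =ᶠ[𝓝 x] fun t => K * (p * t ^ (p - 1)) :=
      eventually_of_mem (isOpen_Ioi.mem_nhds hx) hd1
    rw [hdF.deriv_eq]
    exact (((Real.hasDerivAt_rpow_const (p := p - 1)
      (Or.inl hx.ne')).const_mul p).const_mul K).deriv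
  have h2 : iteratedDeriv 2 F x = deriv (deriv F) x := by
    rw [iteratedDeriv_succ, iteratedDeriv_one]
  rw [rlDerivN]
  have hcast : ((1:ℕ) : ℝ) + 1 - q = 2 - q := by push_cast; ring
  rw [hcast]
  have : (fun t : ℝ => ∫ y in (0:ℝ)..t, c * |y| ^ γ / (t - y) ^ (q - ((1:ℕ):ℝ))) = F := rfl
  rw [this, h2, hd2, show p - 1 - 1 = γ - q by rw [hp]; ring, show p - 1 = γ + 1 - q by rw [hp]; ring]
  ring
theorem stmt4 (a b c γ : ℝ) (hc : c ≠ 0) (hγ1 : 1 < γ) (hγ2 : γ < 2) :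
    (∀ q : ℝ, 1 < q → q < γ →
      HasLFDgen (fun x => a + b * x + c * |x| ^ γ) q 0 1 0) ∧
    (∀ q : ℝ, γ < q → q < 2 →
      ¬ ∃ L, HasLFDgen (fun x => a + b * x + c * |x| ^ γ) q 0 1 L) := by
  have key : ∀ q : ℝ, 1 < q → q < 2 → ∀ x ∈ Ioi (0:ℝ),
      rlDerivN q 0 1
        (fun u => (a + b * u + c * |u| ^ γ) - ∑ n ∈ Finset.range (1 + 1),
          iteratedDeriv n (fun x => a + b * x + c * |x| ^ γ) 0 / Real.Gamma (n + 1)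
            * (u - 0) ^ n) x
      = ((1 / Real.Gamma (2 - q)) * (c * betaI γ q) * (γ + 2 - q) * (γ + 1 - q))
        * x ^ (γ - q) := by
    intro q hq1 hq2 x hx
    rw [taylor_part a b c γ hγ1]
    exact rl_eq c γ q x hγ1 hq1 hq2 hx
  constructor
  · intro q hq1 hqγ
    have hq2 : q < 2 := by linarith
    unfold HasLFDgen
    have h0 : Tendsto (fun x : ℝ => x ^ (γ - q)) (𝓝[>] (0:ℝ)) (𝓝 0) := by
      have := (Real.continuousAt_rpow_const 0 (γ - q) (Or.inr (by linarith))).tendsto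
      rw [Real.zero_rpow (by linarith : γ - q ≠ 0)] at this
      exact this.mono_left nhdsWithin_le_nhds
    have := h0.const_mul ((1 / Real.Gamma (2 - q)) * (c * betaI γ q) * (γ + 2 - q)
      * (γ + 1 - q))
    rw [mul_zero] at this
    apply this.congr'
    filter_upwards [self_mem_nhdsWithin] with x hx
    exact (key q hq1 hq2 x hx).symm
  · rintro q hqγ hq2 ⟨L, hL⟩
    have hq1 : 1 < q := by linarith
    unfold HasLFDgen at hL
    set C := (1 / Real.Gamma (2 - q)) * (c * betaI γ q) * (γ + 2 - q) * (γ + 1 - q) with hC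
    have hCpos : 0 < |C| := by
      have h1 : 0 < Real.Gamma (2 - q) := Real.Gamma_pos_of_pos (by linarith)
      have h2 : 0 < betaI γ q := betaI_pos γ q (by linarith) hq2
      rw [abs_pos, hC]
      exact mul_ne_zero (mul_ne_zero (mul_ne_zero (one_div_ne_zero h1.ne')
        (mul_ne_zero hc h2.ne')) (by linarith)) (by linarith)
    have hLC : Tendsto (fun x : ℝ => C * x ^ (γ - q)) (𝓝[>] (0:ℝ)) (𝓝 L) := by
      apply hL.congr'
      filter_upwards [self_mem_nhdsWithin] with x hx
      exact key q hq1 hq2 x hx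
    have habs : Tendsto (fun x : ℝ => |C| * x ^ (γ - q)) (𝓝[>] (0:ℝ)) (𝓝 |L|) := by
      apply hLC.abs.congr'
      filter_upwards [self_mem_nhdsWithin] with x (hx : (0:ℝ) < x)
      rw [abs_mul, abs_of_pos (Real.rpow_pos_of_pos hx _)]
    have h1 : Tendsto (fun x : ℝ => x ^ (q - γ)) (𝓝[>] (0:ℝ)) (𝓝[>] (0:ℝ)) := by
      apply tendsto_nhdsWithin_of_tendsto_nhds_of_eventually_within
      · have := (Real.continuousAt_rpow_const 0 (q - γ) (Or.inr (by linarith))).tendsto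
        rw [Real.zero_rpow (by linarith : q - γ ≠ 0)] at this
        exact this.mono_left nhdsWithin_le_nhds
      · filter_upwards [self_mem_nhdsWithin] with x (hx : (0:ℝ) < x)
        exact Real.rpow_pos_of_pos hx _
    have h2 : Tendsto (fun x : ℝ => |C| * x ^ (γ - q)) (𝓝[>] (0:ℝ)) atTop := by
      have h3 : Tendsto (fun x : ℝ => (x ^ (q - γ))⁻¹) (𝓝[>] (0:ℝ)) atTop :=
        tendsto_inv_nhdsGT_zero.comp h1
      have h4 := h3.const_mul_atTop hCpos
      apply h4.congr'
      filter_upwards [self_mem_nhdsWithin] with x (hx : (0:ℝ) < x)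
      rw [show γ - q = -(q - γ) by ring, Real.rpow_neg hx.le]
    exact not_tendsto_nhds_of_tendsto_atTop h2 _ habs
end

section
/- Let f(x) = Σ_{n=0}^N a_n x^n + a x^α for x > 0, where N < α < N+1 and a ≠ 0. Then the LFD of f at 0 of order α exists and equals a·Γ(α+1), the LFD of order q equals 0 for N < q < α, and the LFD of order q does not exist for α < q < N+1. -/
open Real Filter Set Topology Asymptotics

private lemma rpow_tendsto_zero {p : ℝ} (hp : 0 < p) :
    Tendsto (fun x : ℝ => x ^ p) (𝓝[>] (0:ℝ)) (𝓝 0) := by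
  have h := (Real.continuousAt_rpow_const 0 p (Or.inr hp.le)).tendsto
  rw [Real.zero_rpow hp.ne'] at h
  exact h.mono_left nhdsWithin_le_nhds

private lemma iter_rpow (c β : ℝ) : ∀ (k : ℕ) (x : ℝ), 0 < x →
    iteratedDeriv k (fun t : ℝ => c * t ^ β) x
      = (c * ∏ i ∈ Finset.range k, (β - i)) * x ^ (β - k) := by
  intro k
  induction k with
  | zero => intro x hx; simp
  | succ k ih =>
    intro x hx
    rw [iteratedDeriv_succ]
    have hev : iteratedDeriv k (fun t : ℝ => c * t ^ β)
        =ᶠ[𝓝 x] fun t => (c * ∏ i ∈ Finset.range k, (β - i)) * t ^ (β - k) := by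
      filter_upwards [isOpen_Ioi.mem_nhds hx] with t ht using ih t ht
    rw [hev.deriv_eq]
    rw [((Real.hasDerivAt_rpow_const (p := β - k) (Or.inl hx.ne')).const_mul
      (c * ∏ i ∈ Finset.range k, (β - i))).deriv]
    rw [Finset.prod_range_succ, show β - (k:ℝ) - 1 = β - ((k+1 : ℕ) : ℝ) by push_cast; ring]
    ring

private lemma prod_cast_fact (k : ℕ) :
    (∏ i ∈ Finset.range k, ((k:ℝ) - i)) = (Nat.factorial k : ℝ) := by
  rw [← Finset.prod_range_reflect (fun i => ((k:ℝ) - i)) k]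
  have h : ∀ j ∈ Finset.range k, ((k:ℝ) - ((k - 1 - j : ℕ) : ℝ)) = (((j+1 : ℕ)) : ℝ) := by
    intro j hj
    rw [Finset.mem_range] at hj
    rw [Nat.cast_sub (by omega), Nat.cast_sub (by omega)]
    push_cast
    ring
  rw [Finset.prod_congr rfl h, ← Nat.cast_prod, Finset.prod_range_add_one_eq_factorial]

private lemma prod_shift (γ : ℝ) (N : ℕ) :
    (∏ i ∈ Finset.range (N+1), (γ + (N:ℝ) - i)) = ∏ j ∈ Finset.range (N+1), (γ + (j:ℝ)) := by
  rw [← Finset.prod_range_reflect (fun j => γ + (j:ℝ)) (N+1)]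
  refine Finset.prod_congr rfl fun i hi => ?_
  rw [Finset.mem_range] at hi
  rw [show N + 1 - 1 - i = N - i from by omega, Nat.cast_sub (by omega)]
  ring

private lemma Gamma_prod {γ : ℝ} (hγ : 0 < γ) (k : ℕ) :
    Real.Gamma γ * ∏ j ∈ Finset.range k, (γ + (j:ℝ)) = Real.Gamma (γ + k) := by
  induction k with
  | zero => simp
  | succ k ih =>
    rw [Finset.prod_range_succ, ← mul_assoc, ih,
      show γ + ((k+1 : ℕ) : ℝ) = (γ + k) + 1 by push_cast; ring,
      Real.Gamma_add_one (by positivity)]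
    ring


private lemma beta_real {u v : ℝ} (hu : 0 < u) (hv : 0 < v) :
    (∫ s in (0:ℝ)..1, s ^ (u - 1) * (1 - s) ^ (v - 1))
      = Real.Gamma u * Real.Gamma v / Real.Gamma (u + v) := by
  have h1 : Complex.betaIntegral u v
      = ((∫ s in (0:ℝ)..1, s ^ (u-1) * (1-s) ^ (v-1) : ℝ) : ℂ) := by
    rw [Complex.betaIntegral, ← intervalIntegral.integral_ofReal]
    refine intervalIntegral.integral_congr fun s hs => ?_
    rw [Set.uIcc_of_le zero_le_one] at hs
    rw [Complex.ofReal_mul, Complex.ofReal_cpow hs.1, Complex.ofReal_cpow (by linarith [hs.2])]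
    push_cast
    ring
  have h2 := Complex.Gamma_mul_Gamma_eq_betaIntegral
    (s := (u:ℂ)) (t := (v:ℂ)) (by simpa using hu) (by simpa using hv)
  rw [h1, ← Complex.ofReal_add, Complex.Gamma_ofReal, Complex.Gamma_ofReal,
    Complex.Gamma_ofReal, ← Complex.ofReal_mul, ← Complex.ofReal_mul] at h2
  have h3 := Complex.ofReal_injective h2
  have hG : Real.Gamma (u + v) ≠ 0 := (Real.Gamma_pos_of_pos (by linarith)).ne'
  rw [eq_div_iff hG]
  linarith [h3]

private lemma integral_eval (A α q : ℝ) (N : ℕ) {t : ℝ} (ht : 0 < t) :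
    (∫ y in (0:ℝ)..t, (A * y ^ α) / (t - y) ^ (q - (N:ℝ)))
      = (A * ∫ s in (0:ℝ)..1, s ^ α * (1 - s) ^ ((N:ℝ) - q)) * t ^ (α + (N:ℝ) + 1 - q) := by
  have key : ∀ y ∈ Set.uIcc (0:ℝ) t, (A * y ^ α) / (t - y) ^ (q - (N:ℝ))
      = A * (y ^ α * (t - y) ^ ((N:ℝ) - q)) := by
    intro y hy
    rw [Set.uIcc_of_le ht.le] at hy
    have h0 : (0:ℝ) ≤ t - y := by linarith [hy.2]
    rw [show (N:ℝ) - q = -(q - (N:ℝ)) by ring, Real.rpow_neg h0, div_eq_mul_inv]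
    ring
  rw [intervalIntegral.integral_congr key, intervalIntegral.integral_const_mul]
  have subst := intervalIntegral.integral_comp_mul_right (a := 0) (b := 1)
      (f := fun y => y ^ α * (t - y) ^ ((N:ℝ) - q)) ht.ne'
  rw [zero_mul, one_mul] at subst
  have h4 : (∫ y in (0:ℝ)..t, y ^ α * (t - y) ^ ((N:ℝ) - q))
      = t * ∫ s in (0:ℝ)..1, (s*t) ^ α * (t - s*t) ^ ((N:ℝ) - q) := by
    rw [subst, smul_eq_mul, ← mul_assoc, mul_inv_cancel₀ ht.ne', one_mul]
  rw [h4]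
  have congr2 : (∫ s in (0:ℝ)..1, (s*t) ^ α * (t - s*t) ^ ((N:ℝ) - q))
      = ∫ s in (0:ℝ)..1, (t ^ α * t ^ ((N:ℝ) - q)) * (s ^ α * (1-s) ^ ((N:ℝ) - q)) := by
    refine intervalIntegral.integral_congr fun s hs => ?_
    rw [Set.uIcc_of_le zero_le_one] at hs
    rw [Real.mul_rpow hs.1 ht.le, show t - s*t = (1-s)*t by ring,
      Real.mul_rpow (by linarith [hs.2]) ht.le]
    ring
  rw [congr2, intervalIntegral.integral_const_mul,
    show α + (N:ℝ) + 1 - q = α + ((N:ℝ) - q) + 1 by ring,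
    Real.rpow_add ht, Real.rpow_add ht, Real.rpow_one]
  ring


private lemma coeff_cast (n k : ℕ) :
    (∏ i ∈ Finset.range k, ((n:ℝ) - i)) * ((n - k : ℕ) : ℝ)
      = (∏ i ∈ Finset.range k, ((n:ℝ) - i)) * ((n:ℝ) - k) := by
  rcases le_or_gt k n with h | h
  · rw [Nat.cast_sub h]
  · have hz : (∏ i ∈ Finset.range k, ((n:ℝ) - i)) = 0 :=
      Finset.prod_eq_zero (Finset.mem_range.2 h) (by simp)
    simp [hz]

private lemma iter_f (N : ℕ) (a : ℕ → ℝ) (A α : ℝ) (hα : (N:ℝ) < α) :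
    ∀ k ≤ N, deriv^[k] (fun x : ℝ => (∑ n ∈ Finset.range (N+1), a n * x ^ n) + A * x ^ α)
      = fun x => (∑ n ∈ Finset.range (N+1),
          a n * (∏ i ∈ Finset.range k, ((n:ℝ) - i)) * x ^ (n - k))
        + A * (∏ i ∈ Finset.range k, (α - i)) * x ^ (α - (k:ℝ)) := by
  intro k
  induction k with
  | zero => intro _; simp
  | succ k ih =>
    intro hk
    have hk' : k ≤ N := Nat.le_of_succ_le hk
    have h1k : (1:ℝ) ≤ α - k := by
      have h : ((k:ℝ) + 1) ≤ (N:ℝ) := by exact_mod_cast hk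
      linarith
    rw [Function.iterate_succ_apply', ih hk']
    funext x
    have hpoly : ∀ n ∈ Finset.range (N+1), HasDerivAt
        (fun x : ℝ => a n * (∏ i ∈ Finset.range k, ((n:ℝ) - i)) * x ^ (n - k))
        (a n * (∏ i ∈ Finset.range k, ((n:ℝ) - i)) * (((n - k : ℕ) : ℝ) * x ^ (n - k - 1))) x :=
      fun n _ => (hasDerivAt_pow (n - k) x).const_mul _
    have hrpow : HasDerivAt (fun x : ℝ => A * (∏ i ∈ Finset.range k, (α - i)) * x ^ (α - (k:ℝ)))
        (A * (∏ i ∈ Finset.range k, (α - i)) * ((α - (k:ℝ)) * x ^ (α - (k:ℝ) - 1))) x :=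
      (Real.hasDerivAt_rpow_const (Or.inr h1k)).const_mul _
    have hD := (HasDerivAt.fun_sum hpoly).fun_add hrpow
    rw [hD.deriv]
    congr 1
    · refine Finset.sum_congr rfl fun n _ => ?_
      rw [Finset.prod_range_succ, ← Nat.sub_sub]
      linear_combination (a n * x ^ (n - k - 1)) * coeff_cast n k
    · rw [Finset.prod_range_succ, show α - ((k+1 : ℕ) : ℝ) = α - (k:ℝ) - 1 by push_cast; ring]
      ring

private lemma iterDeriv_f_zero (N : ℕ) (a : ℕ → ℝ) (A α : ℝ) (hα : (N:ℝ) < α)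
    {k : ℕ} (hk : k ≤ N) :
    iteratedDeriv k (fun x : ℝ => (∑ n ∈ Finset.range (N+1), a n * x ^ n) + A * x ^ α) 0
      = (Nat.factorial k : ℝ) * a k := by
  rw [iteratedDeriv_eq_iterate]
  simp only [iter_f N a A α hα k hk]
  have hkα : (0:ℝ) < α - (k:ℝ) := by
    have h : (k:ℝ) ≤ (N:ℝ) := by exact_mod_cast hk
    linarith
  rw [Real.zero_rpow hkα.ne', mul_zero, add_zero]
  rw [Finset.sum_eq_single k]
  · rw [Nat.sub_self, pow_zero, mul_one, prod_cast_fact]; ring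
  · intro n hn hne
    rcases lt_or_gt_of_ne hne with h | h
    · have hz : (∏ i ∈ Finset.range k, ((n:ℝ) - i)) = 0 :=
        Finset.prod_eq_zero (Finset.mem_range.2 h) (by simp)
      simp [hz]
    · rw [zero_pow (Nat.sub_ne_zero_of_lt h), mul_zero]
  · intro h
    exact absurd (Finset.mem_range.2 (Nat.lt_succ_of_le hk)) h

private lemma remainder_eq (N : ℕ) (a : ℕ → ℝ) (A α : ℝ) (hα : (N:ℝ) < α) :
    (fun u : ℝ => ((∑ n ∈ Finset.range (N+1), a n * u ^ n) + A * u ^ α)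
      - ∑ n ∈ Finset.range (N+1),
          iteratedDeriv n (fun x : ℝ => (∑ m ∈ Finset.range (N+1), a m * x ^ m) + A * x ^ α) 0
            / Real.Gamma ((n:ℝ) + 1) * (u - 0) ^ n)
    = fun u => A * u ^ α := by
  funext u
  have hco : ∀ n ∈ Finset.range (N+1),
      iteratedDeriv n (fun x : ℝ => (∑ m ∈ Finset.range (N+1), a m * x ^ m) + A * x ^ α) 0
        / Real.Gamma ((n:ℝ) + 1) * (u - 0) ^ n = a n * u ^ n := by
    intro n hn
    rw [Finset.mem_range, Nat.lt_succ_iff] at hn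
    rw [iterDeriv_f_zero N a A α hα hn, Real.Gamma_nat_eq_factorial, sub_zero]
    have hfac : ((Nat.factorial n : ℝ)) ≠ 0 := by exact_mod_cast (Nat.factorial_pos n).ne'
    field_simp
  rw [Finset.sum_congr rfl hco]
  ring

private lemma rl_eval (N : ℕ) (A α : ℝ) (hα : (N:ℝ) < α) {q : ℝ}
    (hq' : q < (N:ℝ) + 1) {x : ℝ} (hx : 0 < x) :
    rlDerivN q 0 N (fun u => A * u ^ α) x
      = (A * (Real.Gamma (α+1) / Real.Gamma (α+1-q))) * x ^ (α - q) := by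
  have hN0 : (0:ℝ) ≤ (N:ℝ) := Nat.cast_nonneg N
  have hv : 0 < (N:ℝ) + 1 - q := by linarith
  have hγ : 0 < α + 1 - q := by linarith
  have hu : 0 < α + 1 := by linarith
  set B := ∫ s in (0:ℝ)..1, s ^ α * (1 - s) ^ ((N:ℝ) - q) with hB
  have hb := beta_real (u := α+1) (v := (N:ℝ)+1-q) hu hv
  rw [show α+1-1 = α by ring, show (N:ℝ)+1-q-1 = (N:ℝ)-q by ring,
    show α+1+((N:ℝ)+1-q) = α+(N:ℝ)+2-q by ring] at hb
  have hBval : B = Real.Gamma (α+1) * Real.Gamma ((N:ℝ)+1-q) / Real.Gamma (α+(N:ℝ)+2-q) := hb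
  have hprod : (∏ i ∈ Finset.range (N+1), (α + (N:ℝ) + 1 - q - i))
      = Real.Gamma (α+(N:ℝ)+2-q) / Real.Gamma (α+1-q) := by
    have h1 : (∏ i ∈ Finset.range (N+1), (α + (N:ℝ) + 1 - q - i))
        = ∏ i ∈ Finset.range (N+1), ((α+1-q) + (N:ℝ) - i) :=
      Finset.prod_congr rfl fun i _ => by ring
    rw [h1, prod_shift (α+1-q) N]
    have h2 := Gamma_prod hγ (N+1)
    have hγne : Real.Gamma (α+1-q) ≠ 0 := (Real.Gamma_pos_of_pos hγ).ne'
    rw [show ((α+1-q) + ((N+1 : ℕ):ℝ)) = α+(N:ℝ)+2-q by push_cast; ring] at h2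
    field_simp
    linarith [h2]
  have hF : (fun t => ∫ y in (0:ℝ)..t, (A * y ^ α) / (t - y) ^ (q - (N:ℝ)))
      =ᶠ[𝓝 x] fun t => (A * B) * t ^ (α + (N:ℝ) + 1 - q) := by
    filter_upwards [isOpen_Ioi.mem_nhds hx] with t ht
    exact integral_eval A α q N ht
  rw [rlDerivN, hF.iteratedDeriv_eq (N+1), iter_rpow (A*B) (α + (N:ℝ) + 1 - q) (N+1) x hx]
  rw [show α + (N:ℝ) + 1 - q - ((N+1 : ℕ):ℝ) = α - q by push_cast; ring, hprod, hBval]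
  have hvne : Real.Gamma ((N:ℝ)+1-q) ≠ 0 := (Real.Gamma_pos_of_pos hv).ne'
  have hγne : Real.Gamma (α+1-q) ≠ 0 := (Real.Gamma_pos_of_pos hγ).ne'
  have htne : Real.Gamma (α+(N:ℝ)+2-q) ≠ 0 :=
    (Real.Gamma_pos_of_pos (by linarith)).ne'
  field_simp

theorem stmt14 (N : ℕ) (a : ℕ → ℝ) (A α : ℝ) (hA : A ≠ 0)
    (hα : (N : ℝ) < α) (hα' : α < N + 1) :
    HasLFDgen (fun x : ℝ => (∑ n ∈ Finset.range (N + 1), a n * x ^ n) + A * x ^ α)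
      α 0 N (A * Real.Gamma (α + 1)) ∧
    (∀ q : ℝ, (N : ℝ) < q → q < α →
      HasLFDgen (fun x : ℝ => (∑ n ∈ Finset.range (N + 1), a n * x ^ n) + A * x ^ α)
        q 0 N 0) ∧
    (∀ q : ℝ, α < q → q < N + 1 →
      ¬ ∃ L, HasLFDgen (fun x : ℝ => (∑ n ∈ Finset.range (N + 1), a n * x ^ n) + A * x ^ α)
        q 0 N L) := by
  have hrem := remainder_eq N a A α hα
  have hGα : 0 < Real.Gamma (α + 1) :=
    Real.Gamma_pos_of_pos (by linarith [Nat.cast_nonneg (α := ℝ) N])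
  refine ⟨?_, ?_, ?_⟩
  · -- q = α
    unfold HasLFDgen
    rw [hrem]
    refine Tendsto.congr' ?_ (tendsto_const_nhds (x := A * Real.Gamma (α + 1)))
    filter_upwards [self_mem_nhdsWithin] with x hx
    rw [rl_eval N A α hα hα' hx, show α + 1 - α = 1 by ring, Real.Gamma_one,
      show α - α = 0 by ring, Real.rpow_zero]
    ring
  · -- N < q < α
    intro q hq1 hq2
    unfold HasLFDgen
    rw [hrem]
    have h2 : Tendsto (fun x : ℝ => x ^ (α - q)) (𝓝[>] (0:ℝ)) (𝓝 0) :=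
      rpow_tendsto_zero (by linarith)
    have h3 := h2.const_mul (A * (Real.Gamma (α+1) / Real.Gamma (α+1-q)))
    rw [mul_zero] at h3
    refine Tendsto.congr' ?_ h3
    filter_upwards [self_mem_nhdsWithin] with x hx
    rw [rl_eval N A α hα (by linarith) hx]
  · -- α < q < N + 1
    rintro q hq1 hq2 ⟨L, hL⟩
    unfold HasLFDgen at hL
    rw [hrem] at hL
    set K := A * (Real.Gamma (α+1) / Real.Gamma (α+1-q)) with hK
    have hGγ : 0 < Real.Gamma (α+1-q) := Real.Gamma_pos_of_pos (by linarith)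
    have hKne : K ≠ 0 := mul_ne_zero hA (by positivity)
    have hL' : Tendsto (fun x : ℝ => x ^ (α - q)) (𝓝[>] (0:ℝ)) (𝓝 (L / K)) := by
      refine Tendsto.congr' ?_ (hL.div_const K)
      filter_upwards [self_mem_nhdsWithin] with x hx
      rw [rl_eval N A α hα (by linarith) hx, ← hK]
      field_simp
    have h0 : Tendsto (fun x : ℝ => x ^ (α - q) * x ^ (q - α)) (𝓝[>] (0:ℝ)) (𝓝 0) := by
      have := hL'.mul (rpow_tendsto_zero (by linarith : (0:ℝ) < q - α))
      simpa using this
    have h1 : Tendsto (fun x : ℝ => x ^ (α - q) * x ^ (q - α)) (𝓝[>] (0:ℝ)) (𝓝 1) := by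
      refine Tendsto.congr' ?_ (tendsto_const_nhds (x := (1:ℝ)))
      filter_upwards [self_mem_nhdsWithin] with x hx
      rw [← Real.rpow_add hx, show α - q + (q - α) = 0 by ring, Real.rpow_zero]
    exact one_ne_zero (tendsto_nhds_unique h1 h0)
end
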